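/- Let n be a positive integer and let e, a, b, c be positive integers with e < a ≤ b < c, e + c = a + b, and c < n, a + b + c < 2n. Let G be cyclic of order n with generator g, and S = (eg)·(cg)·((n−b)g)·((n−a)g) a minimal zero-sum sequence. If there exist positive integers k, m with kn/c ≤ m ≤ kn/b, gcd(m,n)=1, 1 ≤ k ≤ b, and m·a < n, then ind(S) = 1. -/
import Mathlib


/-- Canonical residue `|x|_n ∈ [1,n]` of `x` modulo `n`. -/
def resid (n x : ℕ) : ℕ := if x % n = 0 then n else x % n

/-- The set of coefficient sums of the sequence (given by its coefficient list
w.r.t. a fixed generator of the cyclic group of order `n`) with respect to all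
generators; a generator corresponds to a unit `w` mod `n`. -/
def indSums (n : ℕ) (S : List ℕ) : Set ℕ :=
  {m | ∃ w : ℕ, Nat.Coprime w n ∧ (S.map (fun x => resid n (w * x))).sum = m}

/-- The index of the sequence: the minimum over generators of the normalized
coefficient sum. -/
noncomputable def seqIndex (n : ℕ) (S : List ℕ) : ℚ :=
  ((sInf (indSums n S) : ℕ) : ℚ) / n

/-- `S` is a minimal zero-sum sequence over the cyclic group of order `n`
(terms encoded by their coefficients w.r.t. a fixed generator). -/
def MinZeroSum (n : ℕ) (S : List ℕ) : Prop :=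
  n ∣ S.sum ∧ ∀ T : List ℕ, List.Sublist T S → T ≠ [] → T ≠ S → ¬ n ∣ T.sum

lemma resid_eq (n x q r : ℕ) (hr : 0 < r) (hrn : r < n) (hx : x = q * n + r) :
    resid n x = r := by
  subst hx
  unfold resid
  have h : (q * n + r) % n = r := by
    rw [Nat.add_comm, Nat.add_mul_mod_self_right, Nat.mod_eq_of_lt hrn]
  rw [h, if_neg (by omega)]

lemma resid_mod (n x : ℕ) : resid n x % n = x % n := by
  unfold resid
  split <;> simp_all [Nat.mod_mod_of_dvd]

lemma resid_modeq (n x : ℕ) : Nat.ModEq n (resid n x) x := resid_mod n x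

lemma resid_pos (n x : ℕ) (hn : 0 < n) : 0 < resid n x := by
  unfold resid
  split
  · exact hn
  · omega

theorem index_one_of_km (n e a b c k m : ℕ) (hn : 0 < n) (he : 0 < e)
    (hea : e < a) (hab : a ≤ b) (hbc : b < c) (hsum : e + c = a + b)
    (hcn : c < n) (h2n : a + b + c < 2 * n)
    (hmin : MinZeroSum n [e, c, n - b, n - a])
    (hk1 : 1 ≤ k) (hkb : k ≤ b) (hm0 : 0 < m) (hgcd : Nat.Coprime m n)
    (hlow : k * n ≤ m * c) (hhigh : m * b ≤ k * n) (hma : m * a < n) :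
    seqIndex n [e, c, n - b, n - a] = 1 := by
  have hbn : b < n := lt_trans hbc hcn
  have han : a < n := lt_of_le_of_lt hab hbn
  have hE : m * e + m * c = m * a + m * b := by
    have : m * (e + c) = m * (a + b) := by rw [hsum]
    simpa [Nat.mul_add] using this
  have hme_lt : m * e < n := lt_trans ((Nat.mul_lt_mul_left hm0).mpr hea) hma
  have hme_pos : 0 < m * e := Nat.mul_pos hm0 he
  have hma_pos : 0 < m * a := Nat.mul_pos hm0 (lt_trans he hea)
  have hmb_pos : 0 < m * b := Nat.mul_pos hm0 (by omega)
  -- strict lower bound k*n < m*c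
  have hclt : k * n < m * c := by
    rcases lt_or_eq_of_le hlow with h | h
    · exact h
    · exfalso
      have hdvd : n ∣ m * c := ⟨k, by rw [← h, Nat.mul_comm]⟩
      have : n ∣ c := (Nat.Coprime.dvd_of_dvd_mul_left hgcd.symm hdvd)
      have := Nat.le_of_dvd (by omega) this
      omega
  -- strict m*b < k*n
  have hblt : m * b < k * n := by
    rcases lt_or_eq_of_le hhigh with h | h
    · exact h
    · exfalso
      have hdvd : n ∣ m * b := ⟨k, by rw [h, Nat.mul_comm]⟩
      have : n ∣ b := (Nat.Coprime.dvd_of_dvd_mul_left hgcd.symm hdvd)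
      have := Nat.le_of_dvd (by omega) this
      omega
  have hcup : m * c < k * n + n := by linarith
  have hbdn : k * n < m * b + n := by linarith
  have hkm : k ≤ m := by
    have h1 : m * c ≤ m * n := Nat.mul_le_mul_left m hcn.le
    have : k * n ≤ m * n := le_trans hlow h1
    exact Nat.le_of_mul_le_mul_right this hn
  -- compute the four residues for w = m
  have r1 : resid n (m * e) = m * e := resid_eq n _ 0 _ hme_pos hme_lt (by ring)
  have r2 : resid n (m * c) = m * c - k * n := by
    refine resid_eq n (m * c) k (m * c - k * n) (Nat.sub_pos_of_lt hclt) ?_ ?_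
    · rw [tsub_lt_iff_right hlow]; linarith
    · zify [hlow]; ring
  have r3 : resid n (m * (n - b)) = k * n - m * b := by
    refine resid_eq n (m * (n - b)) (m - k) (k * n - m * b) (Nat.sub_pos_of_lt hblt) ?_ ?_
    · rw [tsub_lt_iff_right hhigh]; linarith
    · zify [hkm, hhigh, hbn.le]; ring
  have r4 : resid n (m * (n - a)) = n - m * a := by
    refine resid_eq n (m * (n - a)) (m - 1) (n - m * a) (Nat.sub_pos_of_lt hma) (Nat.sub_lt hn hma_pos) ?_
    zify [hm0, hma.le, han.le]; ring
  have hmem : n ∈ indSums n [e, c, n - b, n - a] := by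
    refine ⟨m, hgcd, ?_⟩
    simp only [List.map_cons, List.map_nil, List.sum_cons, List.sum_nil, r1, r2, r3, r4]
    have hE' : (m : ℤ) * e + m * c = m * a + m * b := by exact_mod_cast hE
    zify [hlow, hhigh, hma.le]
    linarith
  have hSsum : n ∣ e + (c + (n - b + (n - a + 0))) := by
    have := hmin.1
    simpa using this
  have hlb : ∀ t ∈ indSums n [e, c, n - b, n - a], n ≤ t := by
    rintro t ⟨w, hw, ht⟩
    simp only [List.map_cons, List.map_nil, List.sum_cons, List.sum_nil] at ht
    have hmod : Nat.ModEq n t (w * e + (w * c + (w * (n - b) + (w * (n - a) + 0)))) := by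
      rw [← ht]
      exact Nat.ModEq.add (resid_modeq n _) (Nat.ModEq.add (resid_modeq n _)
        (Nat.ModEq.add (resid_modeq n _) (Nat.ModEq.add (resid_modeq n _) (Nat.ModEq.refl 0))))
    have heq : w * e + (w * c + (w * (n - b) + (w * (n - a) + 0))) =
        w * (e + (c + (n - b + (n - a + 0)))) := by ring
    have hdvd : n ∣ w * (e + (c + (n - b + (n - a + 0)))) := Dvd.dvd.mul_left hSsum w
    have hdt : n ∣ t := by
      have : Nat.ModEq n t 0 := by
        calc t ≡ _ [MOD n] := hmod
        _ ≡ 0 [MOD n] := by rw [heq]; exact (Nat.modEq_zero_iff_dvd).mpr hdvd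
      exact (Nat.modEq_zero_iff_dvd).mp this
    have htpos : 0 < t := by
      have := resid_pos n (w * e) hn
      omega
    exact Nat.le_of_dvd htpos hdt
  have hinf : sInf (indSums n [e, c, n - b, n - a]) = n := by
    have h1 : sInf (indSums n [e, c, n - b, n - a]) ≤ n := Nat.sInf_le hmem
    have h2 : n ≤ sInf (indSums n [e, c, n - b, n - a]) :=
      hlb _ (Nat.sInf_mem ⟨n, hmem⟩)
    omega
  unfold seqIndex
  rw [hinf]
  have : (n : ℚ) ≠ 0 := by exact_mod_cast hn.ne'
  field_simp
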